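/- Let n ≥ 1 and let (F, Σₙ, ⬠) be a pre-(n+2)-angulated category. Suppose the sequences X₀ →f₀→ X₁ →f₁→ ⋯ →fₙ→ X_{n+1} →f_{n+1}→ ΣₙX₀ and X₀ →f₀→ X₁ →f₁→ ⋯ →fₙ→ X_{n+1} →g_{n+1}→ ΣₙX₀ are both (n+2)-angles, i.e. they have the same objects and the same morphisms f₀, …, fₙ in positions 0 through n and differ at most in their connecting morphisms f_{n+1}, g_{n+1} : X_{n+1} → ΣₙX₀. If Hom_F(ΣₙX₀, X_{n+1}) = 0, then f_{n+1} = g_{n+1}. -/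

import Mathlib

open CategoryTheory CategoryTheory.Limits

universe v u

namespace NAng

instance (priority := 100) hasBinBiprod (C : Type u) [Category.{v} C] [Preadditive C]
    [HasFiniteBiproducts C] : HasBinaryBiproducts C :=
  hasBinaryBiproducts_of_finite_biproducts C

variable {C : Type u} [Category.{v} C] [Preadditive C] [HasFiniteBiproducts C]

/-- A morphism `f : X ⟶ Y` lies in the radical if for every `g : Y ⟶ X` the
endomorphism `𝟙 X - f ≫ g` is invertible. -/
def InRad {X Y : C} (f : X ⟶ Y) : Prop :=
  ∀ g : Y ⟶ X, IsIso (𝟙 X - f ≫ g)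

/-- A Krull–Schmidt category: every object is a finite direct sum of objects having
local endomorphism rings. -/
def KrullSchmidt (C : Type u) [Category.{v} C] [Preadditive C] [HasFiniteBiproducts C] : Prop :=
  ∀ X : C, ∃ (k : ℕ) (Y : Fin k → C),
    Nonempty (X ≅ ⨁ Y) ∧ ∀ i, IsLocalRing (End (Y i))

/-- `Z ∈ add M`: `Z` is a retract of a finite direct sum of copies of `M`. -/
def InAdd (M Z : C) : Prop :=
  ∃ (k : ℕ) (ι : Z ⟶ ⨁ fun _ : Fin k => M) (π : (⨁ fun _ : Fin k => M) ⟶ Z),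
    ι ≫ π = 𝟙 Z

variable (n : ℕ) (S : C ⥤ C)

/-- An "unrolled" candidate `(n+2)`-angle: an infinite complex which is
`(n+2)`-periodic up to `S` and the sign `(-1)ⁿ`.  The (n+2)-angle
`X₀ → X₁ → ⋯ → X_{n+1} → S X₀` is recorded by the objects `X 0, …, X (n+1)`,
the maps `d 0, …, d n`, and the connecting morphism `d (n+1) ≫ (σ 0).hom`. -/
structure Cand where
  X : ℕ → C
  d : ∀ i, X i ⟶ X (i + 1)
  σ : ∀ i, X (n + 2 + i) ≅ S.obj (X i)
  compat : ∀ i, d (n + 2 + i) =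
    (σ i).hom ≫ (((-1 : ℤ) ^ n) • S.map (d i)) ≫ (σ (i + 1)).inv

/-- A morphism of candidate `(n+2)`-angles. -/
structure CandHom (A B : Cand n S) where
  φ : ∀ i, A.X i ⟶ B.X i
  comm : ∀ i, A.d i ≫ φ (i + 1) = φ i ≫ B.d i
  shift : ∀ i, φ (n + 2 + i) = (A.σ i).hom ≫ S.map (φ i) ≫ (B.σ i).inv

variable {n S}

/-- Rotation of a candidate `(n+2)`-angle. -/
def Cand.rot (A : Cand n S) : Cand n S where
  X i := A.X (i + 1)
  d i := A.d (i + 1)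
  σ i := A.σ (i + 1)
  compat i := A.compat (i + 1)

/-- The connecting morphism `X_{n+1} ⟶ S X₀` of a candidate `(n+2)`-angle. -/
def Cand.conn (A : Cand n S) : A.X (n + 1) ⟶ S.obj (A.X 0) :=
  A.d (n + 1) ≫ (A.σ 0).hom

variable (n S)

instance (priority := 100) preservesBinaryBiproductsOfAdditive {D : Type u} [Category.{v} D]
    [Preadditive D] (F : C ⥤ D) [F.Additive] : PreservesBinaryBiproducts F :=
  preservesBinaryBiproducts_of_preservesBiproducts F

/-- The differentials of the mapping cone of a morphism of candidate `(n+2)`-angles. -/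
noncomputable def coneD {A B : Cand n S} (Φ : CandHom n S A B) (j : ℕ) :
    (A.X (j + 1)) ⊞ (B.X j) ⟶ (A.X (j + 2)) ⊞ (B.X (j + 1)) :=
  biprod.fst ≫ (-(A.d (j + 1))) ≫ biprod.inl +
  biprod.fst ≫ Φ.φ (j + 1) ≫ biprod.inr +
  biprod.snd ≫ B.d j ≫ biprod.inr

/-- The periodicity isomorphisms of the mapping cone. -/
noncomputable def coneSigma [S.Additive] (A B : Cand n S) (j : ℕ) :
    (A.X (n + 2 + j + 1)) ⊞ (B.X (n + 2 + j)) ⟶ S.obj ((A.X (j + 1)) ⊞ (B.X j)) :=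
  biprod.map (((-1 : ℤ) ^ n) • (A.σ (j + 1)).hom) ((B.σ j).hom) ≫
    (S.mapBiprod (A.X (j + 1)) (B.X j)).inv

/-- A pre-`(n+2)`-angulated structure: a class of `(n+2)`-angles satisfying the
axioms (F1), (F2) and (F3) of Geiss–Keller–Oppermann. -/
structure PreAngulation where
  angles : Set (Cand n S)
  /-- (F1) closure under direct summands (hence under isomorphisms). -/
  retract_mem : ∀ {A B : Cand n S}, B ∈ angles →
    ∀ (ι : CandHom n S A B) (π : CandHom n S B A),
      (∀ i, ι.φ i ≫ π.φ i = 𝟙 (A.X i)) → A ∈ angles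
  /-- (F1) closure under direct sums. -/
  sum_mem : ∀ {A B T : Cand n S}, A ∈ angles → B ∈ angles →
    ∀ (ιA : CandHom n S A T) (ιB : CandHom n S B T)
      (πA : CandHom n S T A) (πB : CandHom n S T B),
      (∀ i, ιA.φ i ≫ πA.φ i = 𝟙 (A.X i)) →
      (∀ i, ιB.φ i ≫ πB.φ i = 𝟙 (B.X i)) →
      (∀ i, ιA.φ i ≫ πB.φ i = 0) →
      (∀ i, ιB.φ i ≫ πA.φ i = 0) →
      (∀ i, πA.φ i ≫ ιA.φ i + πB.φ i ≫ ιB.φ i = 𝟙 (T.X i)) →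
      T ∈ angles
  /-- (F1) trivial `(n+2)`-angles belong to the class. -/
  triv_mem : ∀ T : Cand n S, IsIso (T.d 0) →
    (∀ j, 2 ≤ j → j ≤ n + 1 → IsZero (T.X j)) → T ∈ angles
  /-- (F1) every morphism is the first morphism of some `(n+2)`-angle. -/
  complete : ∀ {X₀ X₁ : C} (f : X₀ ⟶ X₁),
    ∃ A ∈ angles, ∃ (e₀ : Cand.X A 0 ≅ X₀) (e₁ : Cand.X A 1 ≅ X₁),
      Cand.d A 0 = e₀.hom ≫ f ≫ e₁.inv
  /-- (F2) a candidate is an `(n+2)`-angle iff its rotation is. -/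
  rot_mem : ∀ A : Cand n S, A ∈ angles ↔ A.rot ∈ angles
  /-- (F3) completion of commutative squares to morphisms of `(n+2)`-angles. -/
  ext_hom : ∀ {A B : Cand n S}, A ∈ angles → B ∈ angles →
    ∀ (φ₀ : Cand.X A 0 ⟶ Cand.X B 0) (φ₁ : Cand.X A 1 ⟶ Cand.X B 1),
      Cand.d A 0 ≫ φ₁ = φ₀ ≫ Cand.d B 0 →
      ∃ Φ : CandHom n S A B, Φ.φ 0 = φ₀ ∧ Φ.φ 1 = φ₁

/-- An `(n+2)`-angulated structure: a pre-`(n+2)`-angulated structure satisfying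
moreover the higher octahedral axiom, in the "good morphism"/mapping cone form of
Bergh–Thaule (equivalent to (F4) and to (N4*)). -/
structure Angulation [S.Additive] extends PreAngulation n S where
  octa : ∀ {A B : Cand n S}, A ∈ angles → B ∈ angles →
    ∀ (φ₀ : Cand.X A 0 ⟶ Cand.X B 0) (φ₁ : Cand.X A 1 ⟶ Cand.X B 1),
      Cand.d A 0 ≫ φ₁ = φ₀ ≫ Cand.d B 0 →
      ∃ Φ : CandHom n S A B, Φ.φ 0 = φ₀ ∧ Φ.φ 1 = φ₁ ∧
        ∃ T ∈ angles, ∃ e : ∀ j, Cand.X T j ≅ (Cand.X A (j + 1)) ⊞ (Cand.X B j),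
          (∀ j, Cand.d T j = (e j).hom ≫ coneD n S Φ j ≫ (e (j + 1)).inv) ∧
          (∀ j, (Cand.σ T j).hom =
            (e (n + 2 + j)).hom ≫ coneSigma n S A B j ≫ S.map (e j).inv)

/-- A full subcategory (given by a predicate on objects) is additive if it contains
the zero objects and is closed under binary direct sums and direct summands. -/
def AddClosed (P : C → Prop) : Prop :=
  (∀ X : C, IsZero X → P X) ∧
  (∀ X Y : C, P X → P Y → P (X ⊞ Y)) ∧
  (∀ X Y : C, P Y → ∀ (i : X ⟶ Y) (r : Y ⟶ X), i ≫ r = 𝟙 X → P X)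

/-- The subcategory `P` is `n`-extension closed with respect to the class `ang` of
`(n+2)`-angles. -/
def ExtClosed (P : C → Prop) (ang : Set (Cand n S)) : Prop :=
  ∀ {A₀ Atop : C}, P A₀ → P Atop → ∀ f : Atop ⟶ S.obj A₀,
    ∃ W ∈ ang, ∃ (e₀ : Cand.X W 0 ≅ A₀) (etop : Cand.X W (n + 1) ≅ Atop),
      (∀ j, 1 ≤ j → j ≤ n → P (Cand.X W j)) ∧
      Cand.conn W = etop.hom ≫ f ≫ S.map e₀.inv

/-- The candidate `(n+2)`-angle `W` matches the finite complex `(X, d)` in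
positions `0, …, n+1`. -/
def Matches (W : Cand n S) (X : ℕ → C) (d : ∀ i, X i ⟶ X (i + 1)) : Prop :=
  ∃ e : ∀ j, j ≤ n + 1 → (Cand.X W j ≅ X j),
    ∀ j (h : j + 1 ≤ n + 1),
      Cand.d W j = (e j (Nat.le_of_succ_le h)).hom ≫ d j ≫ (e (j + 1) h).inv

/-- `(X, d)` is an `𝒜`-conflation: a complex with terms in `P` which can be
completed to an `(n+2)`-angle. -/
def IsConflation (P : C → Prop) (ang : Set (Cand n S))
    (X : ℕ → C) (d : ∀ i, X i ⟶ X (i + 1)) : Prop :=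
  (∀ j, j ≤ n + 1 → P (X j)) ∧ ∃ W ∈ ang, Matches n S W X d

/-- An `𝒜`-inflation: a morphism in position `0` of some `𝒜`-conflation. -/
def IsInflation (P : C → Prop) (ang : Set (Cand n S)) {X₀ X₁ : C} (f : X₀ ⟶ X₁) : Prop :=
  ∃ (X : ℕ → C) (d : ∀ i, X i ⟶ X (i + 1)), IsConflation n S P ang X d ∧
    ∃ (e₀ : X 0 ≅ X₀) (e₁ : X 1 ≅ X₁), d 0 = e₀.hom ≫ f ≫ e₁.inv

/-- An `𝒜`-deflation: a morphism in position `n` of some `𝒜`-conflation. -/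
def IsDeflation (P : C → Prop) (ang : Set (Cand n S)) {Y₀ Y₁ : C} (f : Y₀ ⟶ Y₁) : Prop :=
  ∃ (X : ℕ → C) (d : ∀ i, X i ⟶ X (i + 1)), IsConflation n S P ang X d ∧
    ∃ (e₀ : X n ≅ Y₀) (e₁ : X (n + 1) ≅ Y₁), d n = e₀.hom ≫ f ≫ e₁.inv

variable {n S}

end NAng

namespace NAng

variable {C : Type u} [Category.{v} C] [Preadditive C] [HasFiniteBiproducts C]

/-- `g` is a weak cokernel of `f` (in the ambient category). -/
def IsWeakCokernel {X Y Z : C} (f : X ⟶ Y) (g : Y ⟶ Z) : Prop :=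
  f ≫ g = 0 ∧ ∀ (W : C) (h : Y ⟶ W), f ≫ h = 0 → ∃ k : Z ⟶ W, h = g ≫ k

/-- `f` is a weak kernel of `g` (in the ambient category). -/
def IsWeakKernel {X Y Z : C} (f : X ⟶ Y) (g : Y ⟶ Z) : Prop :=
  f ≫ g = 0 ∧ ∀ (W : C) (h : W ⟶ Y), h ≫ g = 0 → ∃ k : W ⟶ X, h = k ≫ f

/-- `g` is a weak cokernel of `f` in the full subcategory `P`. -/
def WeakCokernelIn (P : C → Prop) {X Y Z : C} (f : X ⟶ Y) (g : Y ⟶ Z) : Prop :=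
  f ≫ g = 0 ∧ ∀ (W : C), P W → ∀ h : Y ⟶ W, f ≫ h = 0 → ∃ k : Z ⟶ W, h = g ≫ k

/-- `f` is a weak kernel of `g` in the full subcategory `P`. -/
def WeakKernelIn (P : C → Prop) {X Y Z : C} (f : X ⟶ Y) (g : Y ⟶ Z) : Prop :=
  f ≫ g = 0 ∧ ∀ (W : C), P W → ∀ h : W ⟶ Y, h ≫ g = 0 → ∃ k : W ⟶ X, h = k ≫ f

/-- `f` is a monomorphism in the full subcategory `P`. -/
def MonoIn (P : C → Prop) {X Y : C} (f : X ⟶ Y) : Prop :=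
  ∀ (W : C), P W → ∀ a b : W ⟶ X, a ≫ f = b ≫ f → a = b

/-- `f` is an epimorphism in the full subcategory `P`. -/
def EpiIn (P : C → Prop) {X Y : C} (f : X ⟶ Y) : Prop :=
  ∀ (W : C), P W → ∀ a b : Y ⟶ W, f ≫ a = f ≫ b → a = b

variable (n : ℕ)

/-- `(X, d)` (positions `0, …, n+1`) is an `n`-exact sequence in the full additive
subcategory `P`. -/
def IsNExact (P : C → Prop) (X : ℕ → C) (d : ∀ i, X i ⟶ X (i + 1)) : Prop :=
  (∀ j, j ≤ n + 1 → P (X j)) ∧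
  MonoIn P (d 0) ∧ EpiIn P (d n) ∧
  (∀ i, i < n → WeakCokernelIn P (d i) (d (i + 1))) ∧
  (∀ i, i < n → WeakKernelIn P (d i) (d (i + 1)))

/-- An `n`-pushout diagram in the sense of Jasso, of the rows
`X 0 → ⋯ → X n` and `Y 0 → ⋯ → Y n` along the vertical morphisms `φ`. -/
def IsNPushout (P : C → Prop) (X : ℕ → C) (dX : ∀ i, X i ⟶ X (i + 1))
    (Y : ℕ → C) (dY : ∀ i, Y i ⟶ Y (i + 1)) (φ : ∀ k, X k ⟶ Y k) : Prop :=
  (∀ k, k < n → dX k ≫ φ (k + 1) = φ k ≫ dY k) ∧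
  ∃ (Q : ℕ → C) (dQ : ∀ i, Q i ⟶ Q (i + 1)) (α₀ : Q 0 ≅ X 0)
    (α : ∀ k, 1 ≤ k → k ≤ n → (Q k ≅ (X k) ⊞ (Y (k - 1)))) (αtop : Q (n + 1) ≅ Y n),
    (∀ h : 1 ≤ n,
      dQ 0 = α₀.hom ≫ biprod.lift (-(dX 0)) (φ 0) ≫ (α 1 le_rfl h).inv) ∧
    (∀ j, (h : j + 2 ≤ n) →
      dQ (j + 1) = (α (j + 1) (by omega) (by omega)).hom ≫
        (biprod.fst ≫ (-(dX (j + 1))) ≫ biprod.inl +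
         biprod.fst ≫ φ (j + 1) ≫ biprod.inr +
         biprod.snd ≫ dY j ≫ biprod.inr) ≫ (α (j + 2) (by omega) h).inv) ∧
    (∀ j, (h : j + 1 = n) →
      dQ (j + 1) = (α (j + 1) (by omega) (by omega)).hom ≫
        biprod.desc (φ (j + 1)) (dY j) ≫ eqToHom (by rw [h]) ≫ αtop.inv ≫
          eqToHom (by rw [h])) ∧
    (∀ k, k < n → WeakCokernelIn P (dQ k) (dQ (k + 1)))

/-- An `n`-pullback diagram in the sense of Jasso, of the rows
`X 1 → ⋯ → X (n+1)` and `Y 1 → ⋯ → Y (n+1)` along the vertical morphisms `ψ`. -/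
def IsNPullback (P : C → Prop) (X : ℕ → C) (dX : ∀ i, X i ⟶ X (i + 1))
    (Y : ℕ → C) (dY : ∀ i, Y i ⟶ Y (i + 1)) (ψ : ∀ k, Y k ⟶ X k) : Prop :=
  (∀ k, 1 ≤ k → k ≤ n → dY k ≫ ψ (k + 1) = ψ k ≫ dX k) ∧
  ∃ (Q : ℕ → C) (dQ : ∀ i, Q i ⟶ Q (i + 1)) (α₀ : Q 0 ≅ Y 1)
    (α : ∀ k, 1 ≤ k → k ≤ n → (Q k ≅ (Y (k + 1)) ⊞ (X k))) (αtop : Q (n + 1) ≅ X (n + 1)),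
    (∀ h : 1 ≤ n,
      dQ 0 = α₀.hom ≫ biprod.lift (-(dY 1)) (ψ 1) ≫ (α 1 le_rfl h).inv) ∧
    (∀ k, (h1 : 1 ≤ k) → (h : k + 1 ≤ n) →
      dQ k = (α k h1 (by omega)).hom ≫
        (biprod.fst ≫ (-(dY (k + 1))) ≫ biprod.inl +
         biprod.fst ≫ ψ (k + 1) ≫ biprod.inr +
         biprod.snd ≫ dX k ≫ biprod.inr) ≫ (α (k + 1) (by omega) h).inv) ∧
    (∀ h : 1 ≤ n,
      dQ n = (α n h le_rfl).hom ≫ biprod.desc (ψ (n + 1)) (dX n) ≫ αtop.inv) ∧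
    (∀ k, k < n → WeakKernelIn P (dQ k) (dQ (k + 1)))

end NAng

namespace NAng

section Auxiliary

open ZeroObject

variable {C : Type u} [Category.{v} C] [Preadditive C] [HasFiniteBiproducts C]
variable (n : ℕ) (S : C ⥤ C) [S.Additive]

/-- The object pattern of a (shifted) trivial candidate angle. -/
noncomputable def trivX (p : ℕ) (Y : C) : ℕ → C := fun j => if j = p ∨ j = p + 1 then Y else 0

/-- The objects of a (shifted) trivial candidate angle. -/
noncomputable def trivObj (p : ℕ) (Y : C) : ℕ → C :=
  fun i => (S.obj)^[i / (n + 2)] (trivX p Y (i % (n + 2)))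

lemma trivStep {p : ℕ} (hp : p ≤ n) (Y : C) {i : ℕ} (h : i % (n + 2) = p) :
    trivObj n S p Y i = trivObj n S p Y (i + 1) := by
  have h2 : 0 < n + 2 := by omega
  have hi := Nat.div_add_mod i (n + 2)
  have hi1 : i + 1 = (p + 1) + (n + 2) * (i / (n + 2)) := by omega
  have hm : (i + 1) % (n + 2) = p + 1 := by
    rw [hi1, Nat.add_mul_mod_self_left, Nat.mod_eq_of_lt (by omega)]
  have hd : (i + 1) / (n + 2) = i / (n + 2) := by
    rw [hi1, Nat.add_mul_div_left _ _ h2, Nat.div_eq_of_lt (by omega), Nat.zero_add]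
  unfold trivObj trivX
  rw [h, hm, hd, if_pos (Or.inl rfl), if_pos (Or.inr rfl)]

lemma trivShift (p : ℕ) (Y : C) (i : ℕ) :
    trivObj n S p Y (n + 2 + i) = S.obj (trivObj n S p Y i) := by
  have h : n + 2 + i = i + (n + 2) := by omega
  unfold trivObj
  rw [h, Nat.add_mod_right, Nat.add_div_right _ (by omega : 0 < n + 2)]
  exact Function.iterate_succ_apply' S.obj _ _

lemma isZero_iter (k : ℕ) : IsZero ((S.obj)^[k] (0 : C)) := by
  induction k with
  | zero => exact isZero_zero C
  | succ k ih =>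
    rw [Function.iterate_succ_apply']
    exact S.map_isZero ih

lemma trivZero (p : ℕ) (Y : C) {j : ℕ} (h1 : j % (n + 2) ≠ p) (h2 : j % (n + 2) ≠ p + 1) :
    IsZero (trivObj n S p Y j) := by
  unfold trivObj trivX
  rw [if_neg (not_or.mpr ⟨h1, h2⟩)]
  exact isZero_iter S _

/-- The (shifted) trivial candidate angle: identity in positions `p`, `p+1`
(modulo `n+2`, suitably shifted by `S` and signs), zero elsewhere. -/
noncomputable def triv (p : ℕ) (hp : p ≤ n) (Y : C) : Cand n S where
  X := trivObj n S p Y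
  d i := if h : i % (n + 2) = p then
      ((-1 : ℤ) ^ (n * (i / (n + 2)))) • eqToHom (trivStep n S hp Y h) else 0
  σ i := eqToIso (trivShift n S p Y i)
  compat i := by
    have hmod : (n + 2 + i) % (n + 2) = i % (n + 2) := by
      rw [show n + 2 + i = i + (n + 2) by omega, Nat.add_mod_right]
    have hdiv : (n + 2 + i) / (n + 2) = i / (n + 2) + 1 := by
      rw [show n + 2 + i = i + (n + 2) by omega,
        Nat.add_div_right _ (by omega : 0 < n + 2)]
    by_cases h : i % (n + 2) = p
    · rw [dif_pos (hmod.trans h), dif_pos h, hdiv]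
      simp only [eqToIso.hom, eqToIso.inv, Functor.map_zsmul, eqToHom_map,
        Preadditive.comp_zsmul, Preadditive.zsmul_comp, smul_smul, eqToHom_trans]
      congr 1
      rw [← pow_add]
      congr 1
      ring
    · rw [dif_neg (fun hc => h (hmod.symm.trans hc)), dif_neg h]
      simp

lemma triv_d_eq (p : ℕ) (hp : p ≤ n) (Y : C) {i : ℕ} (h : i % (n + 2) = p)
    (h0 : i / (n + 2) = 0) :
    (triv n S p hp Y).d i = eqToHom (trivStep n S hp Y h) := by
  show (if h' : i % (n + 2) = p then
      ((-1 : ℤ) ^ (n * (i / (n + 2)))) • eqToHom (trivStep n S hp Y h') else 0) = _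
  rw [dif_pos h, h0]
  simp

lemma triv_d_zero (p : ℕ) (hp : p ≤ n) (Y : C) {i : ℕ} (h : i % (n + 2) ≠ p) :
    (triv n S p hp Y).d i = 0 := dif_neg h

lemma mem_of_iso_at (PRE : PreAngulation n S) :
    ∀ (k : ℕ) (A : Cand n S), IsIso (A.d k) →
      (∀ j, k + 2 ≤ j → j ≤ k + n + 1 → IsZero (A.X j)) → A ∈ PRE.angles := by
  intro k
  induction k with
  | zero =>
    intro A h1 h2
    exact PRE.triv_mem A h1 fun j hj hj' => h2 j (by omega) (by omega)
  | succ k ih =>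
    intro A h1 h2
    exact (PRE.rot_mem A).mpr (ih A.rot h1 fun j hj hj' => h2 (j + 1) (by omega) (by omega))

lemma triv_mem (PRE : PreAngulation n S) (p : ℕ) (hp : p ≤ n) (Y : C) :
    triv n S p hp Y ∈ PRE.angles := by
  apply mem_of_iso_at n S PRE p
  · have hmod : p % (n + 2) = p := Nat.mod_eq_of_lt (by omega)
    have hdiv : p / (n + 2) = 0 := Nat.div_eq_of_lt (by omega)
    rw [triv_d_eq n S p hp Y hmod hdiv]
    exact Iso.isIso_hom (eqToIso (trivStep n S hp Y hmod))
  · intro j hj1 hj2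
    have h' : j % (n + 2) ≠ p ∧ j % (n + 2) ≠ p + 1 := by
      rcases lt_or_ge j (n + 2) with h | h
      · rw [Nat.mod_eq_of_lt h]; omega
      · rw [Nat.mod_eq_sub_mod h, Nat.mod_eq_of_lt (by omega)]; omega
    exact trivZero n S p Y h'.1 h'.2

lemma d_comp_d (PRE : PreAngulation n S) :
    ∀ (i : ℕ) (A : Cand n S), A ∈ PRE.angles → A.d i ≫ A.d (i + 1) = 0 := by
  intro i
  induction i with
  | zero =>
    intro A hA
    have hT := triv_mem n S PRE 0 (Nat.zero_le n) (A.X 0)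
    have pf0 : (triv n S 0 (Nat.zero_le n) (A.X 0)).X 0 = A.X 0 := by
      show trivObj n S 0 (A.X 0) 0 = A.X 0
      unfold trivObj trivX
      rw [Nat.zero_mod, Nat.zero_div, if_pos (Or.inl rfl)]
      rfl
    have pf1 : (triv n S 0 (Nat.zero_le n) (A.X 0)).X 1 = A.X 0 := by
      show trivObj n S 0 (A.X 0) 1 = A.X 0
      unfold trivObj trivX
      rw [Nat.mod_eq_of_lt (by omega), Nat.div_eq_of_lt (by omega), if_pos (Or.inr rfl)]
      rfl
    have hd0 := triv_d_eq n S 0 (Nat.zero_le n) (A.X 0) (Nat.zero_mod _) (Nat.zero_div _)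
    have sq : (triv n S 0 (Nat.zero_le n) (A.X 0)).d 0 ≫ (eqToHom pf1 ≫ A.d 0) =
        eqToHom pf0 ≫ A.d 0 := by
      rw [hd0]
      exact eqToHom_trans_assoc _ _ _
    obtain ⟨Φ, hΦ0, hΦ1⟩ := PRE.ext_hom hT hA (eqToHom pf0) (eqToHom pf1 ≫ A.d 0) sq
    have h1mod : (1 : ℕ) % (n + 2) ≠ 0 := by
      rw [Nat.mod_eq_of_lt (by omega)]; omega
    have hc := Φ.comm 1
    rw [triv_d_zero n S 0 (Nat.zero_le n) (A.X 0) h1mod, hΦ1, zero_comp] at hc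
    rw [← cancel_epi (eqToHom pf1)]
    simpa using hc.symm
  | succ i ih =>
    intro A hA
    exact ih A.rot ((PRE.rot_mem A).mp hA)

lemma weak_coker (PRE : PreAngulation n S) (hn : 1 ≤ n) :
    ∀ (i : ℕ) (A : Cand n S), A ∈ PRE.angles → ∀ {V : C} (h : A.X (i + 1) ⟶ V),
      A.d i ≫ h = 0 → ∃ s : A.X (i + 2) ⟶ V, h = A.d (i + 1) ≫ s := by
  intro i
  induction i with
  | zero =>
    intro A hA V h hh
    have hU := triv_mem n S PRE 1 hn V
    have pf1 : (triv n S 1 hn V).X 1 = V := by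
      show trivObj n S 1 V 1 = V
      unfold trivObj trivX
      rw [Nat.mod_eq_of_lt (by omega), Nat.div_eq_of_lt (by omega), if_pos (Or.inl rfl)]
      rfl
    have pf2 : (triv n S 1 hn V).X 2 = V := by
      show trivObj n S 1 V 2 = V
      unfold trivObj trivX
      rw [Nat.mod_eq_of_lt (by omega), Nat.div_eq_of_lt (by omega), if_pos (Or.inr rfl)]
      rfl
    have sq : A.d 0 ≫ (h ≫ eqToHom pf1.symm) =
        (0 : A.X 0 ⟶ (triv n S 1 hn V).X 0) ≫ (triv n S 1 hn V).d 0 := by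
      rw [zero_comp, ← Category.assoc, hh, zero_comp]
    obtain ⟨Φ, hΦ0, hΦ1⟩ := PRE.ext_hom hA hU 0 (h ≫ eqToHom pf1.symm) sq
    have hd1 := triv_d_eq n S 1 hn V (i := 1) (Nat.mod_eq_of_lt (by omega))
      (Nat.div_eq_of_lt (by omega))
    have hc2 : A.d (0 + 1) ≫ Φ.φ 2 = Φ.φ 1 ≫ (triv n S 1 hn V).d 1 := Φ.comm 1
    rw [hΦ1, hd1] at hc2
    refine ⟨Φ.φ 2 ≫ eqToHom pf2, ?_⟩
    rw [← Category.assoc, hc2]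
    erw [Category.assoc, Category.assoc, eqToHom_trans, eqToHom_trans, eqToHom_refl,
      Category.comp_id]
  | succ i ih =>
    intro A hA V h hh
    exact ih A.rot ((PRE.rot_mem A).mp hA) h hh

end Auxiliary

/-- In a pre-`(n+2)`-angulated category, if two `(n+2)`-angles have the
same objects `X 0, …, X (n+1)` and the same morphisms `d 0, …, d n` in positions `0`
through `n`, and if `Hom(Σₙ X₀, X_{n+1}) = 0`, then their connecting morphisms agree. -/
theorem statement_4 {C : Type u} [Category.{v} C] [Preadditive C] [HasFiniteBiproducts C]
    (n : ℕ) (hn : 1 ≤ n) (e : C ≌ C)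
    (PRE : PreAngulation n e.functor)
    (X : ℕ → C) (d : ∀ i, X i ⟶ X (i + 1))
    (W W' : Cand n e.functor) (hW : W ∈ PRE.angles) (hW' : W' ∈ PRE.angles)
    (ew : ∀ j, j ≤ n + 1 → (W.X j ≅ X j)) (ew' : ∀ j, j ≤ n + 1 → (W'.X j ≅ X j))
    (hw : ∀ j (h : j + 1 ≤ n + 1),
      W.d j = (ew j (Nat.le_of_succ_le h)).hom ≫ d j ≫ (ew (j + 1) h).inv)
    (hw' : ∀ j (h : j + 1 ≤ n + 1),
      W'.d j = (ew' j (Nat.le_of_succ_le h)).hom ≫ d j ≫ (ew' (j + 1) h).inv)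
    (hvanish : ∀ h : e.functor.obj (X 0) ⟶ X (n + 1), h = 0) :
    (ew (n + 1) le_rfl).inv ≫ Cand.conn W ≫ e.functor.map (ew 0 (Nat.zero_le _)).hom =
      (ew' (n + 1) le_rfl).inv ≫ Cand.conn W' ≫ e.functor.map (ew' 0 (Nat.zero_le _)).hom := by
  classical
  haveI : PreservesBinaryBiproducts e.functor :=
    preservesBinaryBiproducts_of_preservesBinaryProducts e.functor
  haveI : e.functor.Additive := Functor.additive_of_preservesBinaryBiproducts e.functor
  -- the commuting squares between `W` and `W'` given by the identifications with `(X, d)`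
  have key : ∀ (j : ℕ) (hj : j + 1 ≤ n + 1) (hj' : j ≤ n + 1),
      ((ew j hj').hom ≫ (ew' j hj').inv) ≫ W'.d j =
        W.d j ≫ ((ew (j + 1) hj).hom ≫ (ew' (j + 1) hj).inv) := by
    intro j hj hj'
    have e1 : W.d j = (ew j hj').hom ≫ d j ≫ (ew (j + 1) hj).inv := hw j hj
    have e2 : W'.d j = (ew' j hj').hom ≫ d j ≫ (ew' (j + 1) hj).inv := hw' j hj
    rw [e1, e2]
    simp
  -- main induction: a morphism of candidates agreeing with the identifications up to stage m
  have main : ∀ m, 1 ≤ m → m ≤ n → ∃ c : ∀ i, W.X i ⟶ W'.X i,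
      (∀ i, m ≤ i → i ≤ n + 1 → W.d i ≫ c (i + 1) = c i ≫ W'.d i) ∧
      (∀ hm : m ≤ n + 1, c m = (ew m hm).hom ≫ (ew' m hm).inv) ∧
      c (n + 2) = (W.σ 0).hom ≫
        e.functor.map ((ew 0 (Nat.zero_le _)).hom ≫ (ew' 0 (Nat.zero_le _)).inv) ≫
        (W'.σ 0).inv := by
    intro m
    induction m with
    | zero => intro h1; omega
    | succ m ih =>
      intro _ hmn
      rcases Nat.eq_zero_or_pos m with rfl | hm1
      · -- base case `m + 1 = 1`
        have h00 : (0 : ℕ) ≤ n + 1 := by omega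
        have h01 : (1 : ℕ) ≤ n + 1 := by omega
        have sq01 : W.d 0 ≫ ((ew 1 h01).hom ≫ (ew' 1 h01).inv) =
            ((ew 0 h00).hom ≫ (ew' 0 h00).inv) ≫ W'.d 0 := (key 0 h01 h00).symm
        obtain ⟨Φ, hΦ0, hΦ1⟩ := PRE.ext_hom hW hW'
          ((ew 0 h00).hom ≫ (ew' 0 h00).inv) ((ew 1 h01).hom ≫ (ew' 1 h01).inv) sq01
        refine ⟨Φ.φ, fun i _ _ => Φ.comm i, fun hm => hΦ1, ?_⟩
        have hs := Φ.shift 0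
        rw [hΦ0] at hs
        exact hs
      · -- inductive step
        obtain ⟨c, hsq, hcm, hshift⟩ := ih hm1 (by omega)
        have hmn1 : m + 1 ≤ n + 1 := by omega
        have hmn2 : m ≤ n + 1 := by omega
        have hδ : W.d m ≫
            (c (m + 1) - ((ew (m + 1) hmn1).hom ≫ (ew' (m + 1) hmn1).inv)) = 0 := by
          rw [Preadditive.comp_sub, hsq m le_rfl (by omega), hcm hmn2, key m hmn1 hmn2,
            sub_self]
        obtain ⟨s, hs⟩ := weak_coker n e.functor PRE hn m W hW _ hδ
        set c' : ∀ i, W.X i ⟶ W'.X i := fun i =>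
          if h1 : i = m + 1 then
            c i - (eqToHom (by rw [h1]) ≫ (W.d (m + 1) ≫ s) ≫ eqToHom (by rw [h1]))
          else if h2 : i = m + 2 then
            c i - (eqToHom (by rw [h2]) ≫ (s ≫ W'.d (m + 1)) ≫ eqToHom (by rw [h2]))
          else c i with hc'def
        have F1 : ∀ i, i ≠ m + 1 → i ≠ m + 2 → c' i = c i := by
          intro i h1 h2
          simp only [hc'def]
          rw [dif_neg h1, dif_neg h2]
        have F2 : c' (m + 1) = c (m + 1) - W.d (m + 1) ≫ s := by
          simp only [hc'def]
          simp
        have F3 : c' (m + 2) = c (m + 2) - s ≫ W'.d (m + 1) := by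
          simp only [hc'def]
          simp
        refine ⟨c', ?_, ?_, ?_⟩
        · intro i hi1 hi2
          by_cases hA : i = m + 1
          · subst hA
            rw [F2, F3, Preadditive.comp_sub, Preadditive.sub_comp,
              hsq (m + 1) (by omega) hi2]
            rw [Category.assoc]
          · by_cases hB : i = m + 2
            · subst hB
              have hz : W'.d (m + 1) ≫ W'.d (m + 2) = 0 :=
                d_comp_d n e.functor PRE (m + 1) W' hW'
              rw [F1 (m + 2 + 1) (by omega) (by omega), F3, Preadditive.sub_comp,
                Category.assoc, hz, comp_zero, sub_zero]
              exact hsq (m + 2) (by omega) hi2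
            · rw [F1 i hA hB, F1 (i + 1) (by omega) (by omega)]
              exact hsq i (by omega) hi2
        · intro hm
          rw [F2, ← hs, sub_sub_cancel]
        · rw [F1 (n + 2) (by omega) (by omega)]
          exact hshift
  obtain ⟨c, hsq, hcm, hshift⟩ := main n hn le_rfl
  have hn1 : n ≤ n + 1 := by omega
  -- the difference at position `n + 1` vanishes thanks to `hvanish`
  have hδ : W.d n ≫
      (c (n + 1) - ((ew (n + 1) le_rfl).hom ≫ (ew' (n + 1) le_rfl).inv)) = 0 := by
    rw [Preadditive.comp_sub, hsq n le_rfl (by omega), hcm hn1, key n le_rfl hn1, sub_self]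
  obtain ⟨t, ht⟩ := weak_coker n e.functor PRE hn n W hW _ hδ
  have ht0 : t = 0 := by
    have hv := hvanish (e.functor.map (ew 0 (Nat.zero_le _)).inv ≫ (W.σ 0).inv ≫ t ≫
      (ew' (n + 1) le_rfl).hom)
    have htt : t = ((W.σ 0).hom ≫ e.functor.map (ew 0 (Nat.zero_le _)).hom) ≫
        (e.functor.map (ew 0 (Nat.zero_le _)).inv ≫ (W.σ 0).inv ≫ t ≫
          (ew' (n + 1) le_rfl).hom) ≫ (ew' (n + 1) le_rfl).inv := by
      simp [← Functor.map_comp_assoc]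
    rw [htt, hv, zero_comp, comp_zero]
  rw [ht0, comp_zero] at ht
  have hc1 : c (n + 1) = (ew (n + 1) le_rfl).hom ≫ (ew' (n + 1) le_rfl).inv :=
    sub_eq_zero.mp ht
  have hfin := hsq (n + 1) (by omega) le_rfl
  rw [hshift, hc1] at hfin
  -- conclude
  have goal' := congrArg (fun g => (ew (n + 1) le_rfl).inv ≫ g ≫ (W'.σ 0).hom ≫
    e.functor.map (ew' 0 (Nat.zero_le _)).hom) hfin
  simp only [Category.assoc, Iso.inv_hom_id_assoc, Functor.map_comp] at goal'
  simp only [Cand.conn, Category.assoc]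
  convert goal' using 2
  simp [← Functor.map_comp_assoc]

end NAng
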